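/- Let k ≥ 1 be an integer, λ > 0, b₁ ≥ 0 and b₂ > 0. Let Y₁, Y₂ be independent ℕ-valued random variables on a probability space with P(Y₁ = j) = e^{-kλb₁} c_k(j, λb₁) and P(Y₂ = j) = e^{-kλb₂} c_k(j, λb₂) for all j. Then for all integers 0 ≤ m ≤ n, the conditional probability P(Y₂ = m | Y₁ + Y₂ = n) = [c_k(n−m, λb₁) · c_k(m, λb₂)] / c_k(n, λ(b₁+b₂)). (This is the conditional distribution of the homogeneous Poisson field of order k on a subset A₂ ⊆ A₁ given its value on A₁, with b₂ = m_d(A₂) and b₁ = m_d(A₁) − m_d(A₂).) -/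

import Mathlib

open scoped BigOperators

/-- `Omega k n` is the (finite) set of tuples `(x₁,…,x_k)` of non-negative integers with
`x₁ + 2·x₂ + ⋯ + k·x_k = n`. -/
def Omega (k n : ℕ) : Finset (Fin k → ℕ) :=
  (Fintype.piFinset fun _ => Finset.range (n + 1)).filter
    (fun x => ∑ i, (i.1 + 1) * x i = n)

/-- `ζ(x) = x₁ + ⋯ + x_k`. -/
def zeta {k : ℕ} (x : Fin k → ℕ) : ℕ := ∑ i, x i

/-- `Π!(x) = x₁! ⋯ x_k!`. -/
def pifact {k : ℕ} (x : Fin k → ℕ) : ℕ := ∏ i, (x i).factorial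

/-- `c_k(n, y) = ∑_{x ∈ Ω(k,n)} y^{ζ(x)} / Π!(x)`. -/
noncomputable def ck (k n : ℕ) (y : ℝ) : ℝ :=
  ∑ x ∈ Omega k n, y ^ zeta x / (pifact x : ℝ)

lemma binom_div (a b : ℝ) (c : ℕ) :
    (a + b) ^ c / (c.factorial : ℝ)
      = ∑ j ∈ Finset.range (c + 1), (a ^ j / (j.factorial : ℝ)) * (b ^ (c - j) / ((c - j).factorial : ℝ)) := by
  rw [div_eq_iff (by exact_mod_cast (Nat.factorial_pos c).ne')]
  rw [add_pow, Finset.sum_mul]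
  refine Finset.sum_congr rfl fun j hj => ?_
  have hjc : j ≤ c := Nat.lt_succ_iff.mp (Finset.mem_range.mp hj)
  rw [Nat.cast_choose ℝ hjc]
  have h1 : (j.factorial : ℝ) ≠ 0 := by exact_mod_cast (Nat.factorial_pos j).ne'
  have h2 : ((c - j).factorial : ℝ) ≠ 0 := by exact_mod_cast (Nat.factorial_pos (c-j)).ne'
  field_simp

lemma mem_Omega {k n : ℕ} {x : Fin k → ℕ} :
    x ∈ Omega k n ↔ ∑ i, (i.1 + 1) * x i = n := by
  constructor
  · intro h; exact (Finset.mem_filter.mp h).2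
  · intro h
    refine Finset.mem_filter.mpr ⟨Fintype.mem_piFinset.mpr fun i => ?_, h⟩
    rw [Finset.mem_range, Nat.lt_succ_iff, ← h]
    calc x i ≤ (i.1 + 1) * x i := Nat.le_mul_of_pos_left _ (Nat.succ_pos _)
    _ ≤ ∑ i, (i.1 + 1) * x i :=
      Finset.single_le_sum (f := fun i : Fin k => (i.1 + 1) * x i)
        (fun _ _ => Nat.zero_le _) (Finset.mem_univ i)

lemma prod_form {k : ℕ} (a : ℝ) (u : Fin k → ℕ) :
    a ^ zeta u / (pifact u : ℝ) = ∏ i, a ^ (u i) / ((u i).factorial : ℝ) := by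
  rw [zeta, pifact, Finset.prod_div_distrib, Finset.prod_pow_eq_pow_sum, Nat.cast_prod]

lemma term_split {k : ℕ} (a b : ℝ) (x : Fin k → ℕ) :
    (a + b) ^ zeta x / (pifact x : ℝ)
      = ∑ u ∈ Fintype.piFinset (fun i => Finset.range (x i + 1)),
          (∏ i, a ^ (u i) / ((u i).factorial : ℝ))
            * (∏ i, b ^ (x i - u i) / (((x i - u i)).factorial : ℝ)) := by
  rw [prod_form]
  have : ∀ i : Fin k, (a + b) ^ (x i) / ((x i).factorial : ℝ)
      = ∑ j ∈ Finset.range (x i + 1),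
          (a ^ j / (j.factorial : ℝ)) * (b ^ (x i - j) / ((x i - j).factorial : ℝ)) :=
    fun i => binom_div a b (x i)
  rw [Finset.prod_congr rfl fun i _ => this i, Finset.prod_univ_sum]
  exact Finset.sum_congr rfl fun u _ => by rw [Finset.prod_mul_distrib]

lemma ck_conv (k n : ℕ) (a b : ℝ) :
    ∑ j ∈ Finset.range (n + 1), ck k (n - j) a * ck k j b = ck k n (a + b) := by
  have expand : ∀ j, ck k (n - j) a * ck k j b
      = ∑ p ∈ (Omega k (n - j)) ×ˢ (Omega k j),
          (a ^ zeta p.1 / (pifact p.1 : ℝ)) * (b ^ zeta p.2 / (pifact p.2 : ℝ)) := by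
    intro j; rw [ck, ck, Finset.sum_mul_sum, Finset.sum_product]
  calc ∑ j ∈ Finset.range (n + 1), ck k (n - j) a * ck k j b
      = ∑ q ∈ (Finset.range (n+1)).sigma (fun j => (Omega k (n - j)) ×ˢ (Omega k j)),
          (a ^ zeta q.2.1 / (pifact q.2.1 : ℝ)) * (b ^ zeta q.2.2 / (pifact q.2.2 : ℝ)) := by
        rw [Finset.sum_sigma]; exact Finset.sum_congr rfl fun j _ => (expand j).symm ▸ rfl
    _ = ∑ q ∈ (Omega k n).sigma (fun x => Fintype.piFinset (fun i => Finset.range (x i + 1))),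
          (∏ i, a ^ (q.2 i) / ((q.2 i).factorial : ℝ))
            * (∏ i, b ^ (q.1 i - q.2 i) / (((q.1 i - q.2 i)).factorial : ℝ)) := by
        refine Finset.sum_nbij' (fun q => ⟨q.2.1 + q.2.2, q.2.1⟩)
          (fun q => ⟨∑ i, (i.1 + 1) * (q.1 i - q.2 i), (q.2, fun i => q.1 i - q.2 i)⟩)
          ?_ ?_ ?_ ?_ ?_
        · rintro ⟨j, u, v⟩ hq
          dsimp only
          simp only [Finset.mem_sigma, Finset.mem_range, Finset.mem_product, Nat.lt_succ_iff] at hq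
          obtain ⟨hj, hu, hv⟩ := hq
          rw [mem_Omega] at hu hv
          refine Finset.mem_sigma.mpr ⟨mem_Omega.mpr ?_, Fintype.mem_piFinset.mpr fun i => ?_⟩
          · have h3 : ∑ i, (i.1+1) * (u i + v i) = (∑ i, (i.1+1) * u i) + ∑ i, (i.1+1) * v i := by
              rw [← Finset.sum_add_distrib]; exact Finset.sum_congr rfl fun i _ => by ring
            simp only [Pi.add_apply]
            rw [h3, hu, hv]; omega
          · simp [Nat.lt_succ_iff, Pi.add_apply]
        · rintro ⟨x, u⟩ hq
          simp only [Finset.mem_sigma, Fintype.mem_piFinset, Finset.mem_range,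
            Nat.lt_succ_iff] at hq
          obtain ⟨hx, hu⟩ := hq
          rw [mem_Omega] at hx
          have hsplit : (∑ i, (i.1+1) * u i) + ∑ i, (i.1+1) * (x i - u i) = n := by
            rw [← hx, ← Finset.sum_add_distrib]
            refine Finset.sum_congr rfl fun i _ => ?_
            have h2 : u i + (x i - u i) = x i := by have := hu i; omega
            rw [← Nat.mul_add, h2]
          dsimp only
          refine Finset.mem_sigma.mpr ⟨Finset.mem_range.mpr ?_,
            Finset.mem_product.mpr ⟨mem_Omega.mpr ?_, mem_Omega.mpr rfl⟩⟩
          · dsimp only; omega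
          · dsimp only; omega
        · rintro ⟨j, u, v⟩ hq
          simp only [Finset.mem_sigma, Finset.mem_range, Finset.mem_product, Nat.lt_succ_iff] at hq
          obtain ⟨hj, hu, hv⟩ := hq
          rw [mem_Omega] at hv
          dsimp only
          have h1 : (fun i => (u + v) i - u i) = v := by funext i; simp [Pi.add_apply]
          simp only [Pi.add_apply]
          congr 1
          · rw [← hv]; exact Finset.sum_congr rfl fun i _ => by simp
          · simp
        · rintro ⟨x, u⟩ hq
          simp only [Finset.mem_sigma, Fintype.mem_piFinset, Finset.mem_range,
            Nat.lt_succ_iff] at hq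
          have hu := hq.2
          dsimp only
          have : u + (fun i => x i - u i) = x := by funext i; have := hu i; simp [Pi.add_apply]; omega
          simp [this]
        · rintro ⟨j, u, v⟩ hq
          dsimp only
          rw [prod_form a u, prod_form b v]
          congr 1
          refine Finset.prod_congr rfl fun i _ => ?_
          simp [Pi.add_apply]
    _ = ck k n (a + b) := by
        rw [ck, Finset.sum_sigma]
        exact Finset.sum_congr rfl fun x _ => (term_split a b x).symm

lemma ck_nonneg (k n : ℕ) {y : ℝ} (hy : 0 ≤ y) : 0 ≤ ck k n y :=
  Finset.sum_nonneg fun x _ => div_nonneg (pow_nonneg hy _) (Nat.cast_nonneg _)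

lemma ck_pos (k n : ℕ) (hk : 1 ≤ k) {y : ℝ} (hy : 0 < y) : 0 < ck k n y := by
  refine Finset.sum_pos' (fun x _ => div_nonneg (pow_nonneg hy.le _) (Nat.cast_nonneg _)) ?_
  refine ⟨fun i => if i.1 = 0 then n else 0, mem_Omega.mpr ?_, ?_⟩
  · rw [Finset.sum_eq_single_of_mem ⟨0, hk⟩ (Finset.mem_univ _)]
    · simp
    · intro i _ hi
      have : i.1 ≠ 0 := fun h => hi (Fin.ext h)
      simp [this]
  · refine div_pos (pow_pos hy _) ?_
    have : 0 < pifact (fun i : Fin k => if i.1 = 0 then n else 0) :=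
      Finset.prod_pos fun i _ => Nat.factorial_pos _
    exact_mod_cast this

open MeasureTheory ProbabilityTheory

/-- Conditional distribution of the homogeneous Poisson field of order `k` on a subset:
if `Y₁, Y₂` are independent with the order-`k` Poisson pmfs with parameters `kλb₁`, `kλb₂`,
then `P(Y₂ = m | Y₁ + Y₂ = n) = c_k(n−m, λb₁) c_k(m, λb₂) / c_k(n, λ(b₁+b₂))`. -/
theorem cond_homogeneous_poisson_field_of_order_k
    {E : Type*} [MeasurableSpace E] (μ : Measure E) [IsProbabilityMeasure μ]
    (k : ℕ) (hk : 1 ≤ k) (lam b₁ b₂ : ℝ) (hlam : 0 < lam) (hb₁ : 0 ≤ b₁) (hb₂ : 0 < b₂)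
    (Y₁ Y₂ : E → ℕ) (hY₁ : Measurable Y₁) (hY₂ : Measurable Y₂)
    (hindep : IndepFun Y₁ Y₂ μ)
    (hpmf₁ : ∀ j : ℕ,
      μ {ω | Y₁ ω = j} = ENNReal.ofReal (Real.exp (-(k * lam * b₁)) * ck k j (lam * b₁)))
    (hpmf₂ : ∀ j : ℕ,
      μ {ω | Y₂ ω = j} = ENNReal.ofReal (Real.exp (-(k * lam * b₂)) * ck k j (lam * b₂)))
    (m n : ℕ) (hmn : m ≤ n) :
    ProbabilityTheory.cond μ {ω | Y₁ ω + Y₂ ω = n} {ω | Y₂ ω = m} =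
      ENNReal.ofReal
        (ck k (n - m) (lam * b₁) * ck k m (lam * b₂) / ck k n (lam * (b₁ + b₂))) := by
  set e₁ : ℝ := Real.exp (-(k * lam * b₁)) with he₁
  set e₂ : ℝ := Real.exp (-(k * lam * b₂)) with he₂
  have he₁pos : 0 < e₁ := Real.exp_pos _
  have he₂pos : 0 < e₂ := Real.exp_pos _
  have hy₁ : 0 ≤ lam * b₁ := mul_nonneg hlam.le hb₁
  have hy₂ : (0:ℝ) ≤ lam * b₂ := (mul_pos hlam hb₂).le
  -- measurability of the pieces
  have hmeas1 : ∀ j : ℕ, MeasurableSet {ω | Y₁ ω = j} := fun j =>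
    hY₁ (measurableSet_singleton j)
  have hmeas2 : ∀ j : ℕ, MeasurableSet {ω | Y₂ ω = j} := fun j =>
    hY₂ (measurableSet_singleton j)
  have hA : MeasurableSet {ω | Y₁ ω + Y₂ ω = n} :=
    (hY₁.add hY₂) (measurableSet_singleton n)
  -- independence: joint pmf
  have hjoint : ∀ i j : ℕ, μ ({ω | Y₁ ω = i} ∩ {ω | Y₂ ω = j})
      = ENNReal.ofReal ((e₁ * ck k i (lam * b₁)) * (e₂ * ck k j (lam * b₂))) := by
    intro i j
    have : μ (Y₁ ⁻¹' {i} ∩ Y₂ ⁻¹' {j}) = μ (Y₁ ⁻¹' {i}) * μ (Y₂ ⁻¹' {j}) :=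
      hindep.measure_inter_preimage_eq_mul _ _ (measurableSet_singleton i)
        (measurableSet_singleton j)
    have hset1 : Y₁ ⁻¹' {i} = {ω | Y₁ ω = i} := rfl
    have hset2 : Y₂ ⁻¹' {j} = {ω | Y₂ ω = j} := rfl
    rw [hset1, hset2] at this
    rw [this, hpmf₁, hpmf₂, ← ENNReal.ofReal_mul (mul_nonneg he₁pos.le (ck_nonneg _ _ hy₁))]
  -- decomposition of the event {Y₁ + Y₂ = n}
  have hA_eq : {ω | Y₁ ω + Y₂ ω = n}
      = ⋃ j ∈ Finset.range (n + 1), ({ω | Y₁ ω = n - j} ∩ {ω | Y₂ ω = j}) := by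
    ext ω
    simp only [Set.mem_setOf_eq, Set.mem_iUnion, Set.mem_inter_iff, Finset.mem_range,
      Nat.lt_succ_iff, exists_prop]
    constructor
    · intro h; exact ⟨Y₂ ω, by omega, by omega, rfl⟩
    · rintro ⟨j, hj, h1, h2⟩; omega
  have hmuA : μ {ω | Y₁ ω + Y₂ ω = n}
      = ENNReal.ofReal ((e₁ * e₂) * ck k n (lam * (b₁ + b₂))) := by
    rw [hA_eq, measure_biUnion_finset ?disj (fun j _ => (hmeas1 (n-j)).inter (hmeas2 j))]
    case disj =>
      intro i hi j hj hij
      simp only [Function.onFun]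
      refine Set.disjoint_left.mpr ?_
      rintro ω ⟨-, h2⟩ ⟨-, h4⟩
      exact hij (h2.symm.trans h4)
    have hterm : ∀ j ∈ Finset.range (n+1), μ ({ω | Y₁ ω = n - j} ∩ {ω | Y₂ ω = j})
        = ENNReal.ofReal ((e₁ * e₂) * (ck k (n-j) (lam * b₁) * ck k j (lam * b₂))) := by
      intro j _
      rw [hjoint]
      ring_nf
    rw [Finset.sum_congr rfl hterm, ← ENNReal.ofReal_sum_of_nonneg (fun j _ =>
      mul_nonneg (mul_nonneg he₁pos.le he₂pos.le)
        (mul_nonneg (ck_nonneg _ _ hy₁) (ck_nonneg _ _ hy₂)))]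
    rw [← Finset.mul_sum, ck_conv k n (lam * b₁) (lam * b₂)]
    ring_nf
  -- numerator
  have hAB : {ω | Y₁ ω + Y₂ ω = n} ∩ {ω | Y₂ ω = m}
      = {ω | Y₁ ω = n - m} ∩ {ω | Y₂ ω = m} := by
    ext ω
    simp only [Set.mem_inter_iff, Set.mem_setOf_eq]
    omega
  have hC : 0 < ck k n (lam * (b₁ + b₂)) :=
    ck_pos k n hk (mul_pos hlam (by linarith))
  have hE : (0:ℝ) < e₁ * e₂ := mul_pos he₁pos he₂pos
  rw [ProbabilityTheory.cond_apply hA, hAB, hjoint, hmuA, ← ENNReal.div_eq_inv_mul,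
    ← ENNReal.ofReal_div_of_pos (mul_pos hE hC)]
  congr 1
  rw [mul_comm e₁ (ck k (n-m) (lam*b₁))]
  field_simp
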